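/- arXiv:1204.2843 — 2 statements merged into one kernel-verified Lean document; each statement's English description precedes it below -/
import Mathlib

section
/- Let G be a subgroup of Aut(X*) containing a spherically transitive element, and define Y_n : G_∞ → ℕ by Y_n(g) = #{v ∈ X^n : π_n(g)(v) = v}. Then μ({g ∈ G_∞ : the sequence Y_1(g), Y_2(g), Y_3(g), … is eventually constant}) = 1. -/
/-- The automorphism group of the rooted `d`-ary tree `X*` (words over `Fin d`),
realized as the subgroup of permutations of `List (Fin d)` preserving word length
and the prefix relation. -/
def treeAutGroup (d : ℕ) : Subgroup (Equiv.Perm (List (Fin d))) where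
  carrier := {g | (∀ v, (g v).length = v.length) ∧ ∀ v w, v <+: w ↔ g v <+: g w}
  one_mem' := ⟨fun _ => rfl, fun _ _ => Iff.rfl⟩
  mul_mem' := by
    rintro a b ⟨ha1, ha2⟩ ⟨hb1, hb2⟩
    refine ⟨fun v => ?_, fun v w => ?_⟩
    · simpa [Equiv.Perm.mul_apply] using (ha1 (b v)).trans (hb1 v)
    · simpa [Equiv.Perm.mul_apply] using (hb2 v w).trans (ha2 (b v) (b w))
  inv_mem' := by
    rintro g ⟨h1, h2⟩
    refine ⟨fun v => ?_, fun v w => ?_⟩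
    · conv_rhs => rw [← (by simp : g (g⁻¹ v) = v)]
      exact (h1 _).symm
    · have := (h2 (g⁻¹ v) (g⁻¹ w)).symm
      simpa using this

/-- An automorphism of the rooted `d`-ary tree. -/
abbrev TreeAut (d : ℕ) : Type := ↥(treeAutGroup d)

namespace TreeAut

variable {d : ℕ}

theorem length_apply (g : TreeAut d) (v : List (Fin d)) :
    ((g : Equiv.Perm (List (Fin d))) v).length = v.length := g.2.1 v

theorem prefix_iff (g : TreeAut d) (v w : List (Fin d)) :
    v <+: w ↔ (g : Equiv.Perm (List (Fin d))) v <+: (g : Equiv.Perm (List (Fin d))) w :=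
  g.2.2 v w

theorem apply_append (g : TreeAut d) (v w : List (Fin d)) :
    (g : Equiv.Perm (List (Fin d))) (v ++ w) =
      (g : Equiv.Perm (List (Fin d))) v ++
        (((g : Equiv.Perm (List (Fin d))) (v ++ w)).drop v.length) := by
  obtain ⟨t, ht⟩ := (g.prefix_iff v (v ++ w)).mp ⟨w, rfl⟩
  rw [← ht, List.drop_left' (g.length_apply v)]

/-- The restriction of a tree automorphism at the vertex `v`, as a permutation of words:
the unique map with `g (v ++ w) = g v ++ (restrictPerm g v) w`. -/
def restrictPerm (g : TreeAut d) (v : List (Fin d)) : Equiv.Perm (List (Fin d)) where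
  toFun w := (((g : Equiv.Perm (List (Fin d)))) (v ++ w)).drop v.length
  invFun w := (((g : Equiv.Perm (List (Fin d))).symm)
      (((g : Equiv.Perm (List (Fin d))) v) ++ w)).drop v.length
  left_inv w := by
    dsimp only
    have h := (g.apply_append v w).symm
    rw [h, Equiv.symm_apply_apply, List.drop_left]
  right_inv w := by
    dsimp only
    have hpre : v <+: (g : Equiv.Perm (List (Fin d))).symm
        ((g : Equiv.Perm (List (Fin d))) v ++ w) := by
      have := (g.prefix_iff v ((g : Equiv.Perm (List (Fin d))).symm
        ((g : Equiv.Perm (List (Fin d))) v ++ w))).symm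
      rw [Equiv.apply_symm_apply] at this
      exact this.mp ⟨w, rfl⟩
    obtain ⟨u, hu⟩ := hpre
    rw [← hu, List.drop_left]
    have h2 : (g : Equiv.Perm (List (Fin d))) (v ++ u) =
        (g : Equiv.Perm (List (Fin d))) v ++ w := by rw [hu, Equiv.apply_symm_apply]
    rw [h2, List.drop_left' (g.length_apply v)]

theorem restrictPerm_mem (g : TreeAut d) (v : List (Fin d)) :
    restrictPerm g v ∈ treeAutGroup d := by
  constructor
  · intro w
    show (((g : Equiv.Perm (List (Fin d))) (v ++ w)).drop v.length).length = w.length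
    rw [List.length_drop, g.length_apply, List.length_append]
    omega
  · intro w w'
    show w <+: w' ↔
      ((g : Equiv.Perm (List (Fin d))) (v ++ w)).drop v.length <+:
        ((g : Equiv.Perm (List (Fin d))) (v ++ w')).drop v.length
    calc w <+: w' ↔ v ++ w <+: v ++ w' := (List.prefix_append_right_inj v).symm
      _ ↔ (g : Equiv.Perm (List (Fin d))) (v ++ w) <+:
            (g : Equiv.Perm (List (Fin d))) (v ++ w') := g.prefix_iff _ _
      _ ↔ _ := by
            conv_lhs => rw [g.apply_append v w, g.apply_append v w']
            exact List.prefix_append_right_inj _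

/-- The restriction `g|_v` of a tree automorphism `g` at a vertex `v`, as a tree
automorphism: the unique automorphism with `g (v ++ w) = g v ++ g|_v w` for all `w`. -/
def restrict (g : TreeAut d) (v : List (Fin d)) : TreeAut d :=
  ⟨restrictPerm g v, restrictPerm_mem g v⟩

/-- `g` fixes the end (infinite word) `w` of the tree: it fixes every finite initial
segment of `w`. -/
def FixesEnd (g : TreeAut d) (w : ℕ → Fin d) : Prop :=
  ∀ n : ℕ, (g : Equiv.Perm (List (Fin d))) ((List.range n).map w) = (List.range n).map w

end TreeAut

/-- `g` is spherically transitive: the cyclic group it generates acts transitively on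
the words of length `n`, for every `n ≥ 1`. -/
def SphericallyTransitive {d : ℕ} (g : TreeAut d) : Prop :=
  ∀ n : ℕ, 1 ≤ n → ∀ v w : List (Fin d), v.length = n → w.length = n →
    ∃ k : ℤ, ((g ^ k : TreeAut d) : Equiv.Perm (List (Fin d))) v = w

/-- The `n`-th level of the tree: words of length `n`. -/
abbrev Level (d n : ℕ) : Type := {v : List (Fin d) // v.length = n}

instance Level.finite (d n : ℕ) : Finite (Level d n) := by
  have key : ∀ v : Level d n,
      v.1 = List.ofFn (fun i : Fin n => v.1.get (Fin.cast v.2.symm i)) := by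
    intro v
    refine List.ext_get (by simp [v.2]) ?_
    intro i h1 h2
    simp [List.get_ofFn, Fin.cast]
  refine Finite.of_injective
    (fun v : Level d n => fun i : Fin n => v.1.get (Fin.cast v.2.symm i)) ?_
  intro v w h
  have h' : (fun i : Fin n => v.1.get (Fin.cast v.2.symm i)) =
      (fun i : Fin n => w.1.get (Fin.cast w.2.symm i)) := h
  refine Subtype.ext ?_
  rw [key v, key w, h']

/-- The action of a tree automorphism on the `n`-th level of the tree. -/
def levelHom (d n : ℕ) : TreeAut d →* Equiv.Perm (Level d n) where
  toFun g :=
    { toFun := fun v => ⟨(g : Equiv.Perm (List (Fin d))) v.1, by rw [g.2.1, v.2]⟩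
      invFun := fun v => ⟨((g⁻¹ : TreeAut d) : Equiv.Perm (List (Fin d))) v.1,
        by rw [(g⁻¹ : TreeAut d).2.1, v.2]⟩
      left_inv := fun v => Subtype.ext (by simp)
      right_inv := fun v => Subtype.ext (by simp) }
  map_one' := by ext v; rfl
  map_mul' g h := by ext v; rfl

/-- The fraction of elements of `G_n` (the image of `G` acting on level `n`)
having at least one fixed point on level `n`. -/
noncomputable def fixedRatio {d : ℕ} (G : Subgroup (TreeAut d)) (n : ℕ) : ℝ :=
  (Nat.card {p : Equiv.Perm (Level d n) // p ∈ G.map (levelHom d n) ∧ ∃ v, p v = v} : ℝ) /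
    (Nat.card (G.map (levelHom d n)) : ℝ)

/-- `G ≤ Aut(X*)` is contracting: there is a finite subset `N ⊆ G` such that every
`g ∈ G` has all its restrictions at sufficiently long words inside `N`. -/
def Contracting {d : ℕ} (G : Subgroup (TreeAut d)) : Prop :=
  ∃ N : Set (TreeAut d), N.Finite ∧ N ⊆ (G : Set (TreeAut d)) ∧
    ∀ g ∈ G, ∃ m : ℕ, 1 ≤ m ∧ ∀ v : List (Fin d), m ≤ v.length → TreeAut.restrict g v ∈ N

/-- The set `N₁` of elements of `G` fixing a non-empty word `v` with `g|_v = g`. -/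
def N1 {d : ℕ} (G : Subgroup (TreeAut d)) : Set (TreeAut d) :=
  {g | g ∈ G ∧ ∃ v : List (Fin d), v ≠ [] ∧ TreeAut.restrict g v = g ∧
    (g : Equiv.Perm (List (Fin d))) v = v}

section Profinite

/-- Permutation groups of (finite) levels carry the discrete topology. -/
instance (α : Type*) : TopologicalSpace (Equiv.Perm α) := ⊥

instance (α : Type*) : DiscreteTopology (Equiv.Perm α) := ⟨rfl⟩

instance (α : Type*) : IsTopologicalGroup (Equiv.Perm α) where
  continuous_mul := continuous_of_discreteTopology
  continuous_inv := continuous_of_discreteTopology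

instance (d n : ℕ) : Finite (Equiv.Perm (Level d n)) := by
  have : Finite (Level d n) := Level.finite d n
  exact Finite.of_injective (fun e : Equiv.Perm (Level d n) => (⇑e, ⇑e.symm))
    (fun e e' h => Equiv.ext fun v => congrFun (Prod.mk.injEq _ _ _ _ ▸ h).1 v)

/-- The simultaneous action of a tree automorphism on all levels of the tree. -/
def prodHom (d : ℕ) : TreeAut d →* Π n : ℕ, Equiv.Perm (Level d n) :=
  Pi.monoidHom fun n => levelHom d n

/-- `G∞`: the closure of (the image of) `G` in the profinite group `Π_n Sym(X^n)`;
equivalently, the inverse limit of the finite groups `G_n`. -/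
def Ginf {d : ℕ} (G : Subgroup (TreeAut d)) : Subgroup (Π n : ℕ, Equiv.Perm (Level d n)) :=
  (G.map (prodHom d)).topologicalClosure

instance {d : ℕ} (G : Subgroup (TreeAut d)) : CompactSpace (Ginf G) :=
  isCompact_iff_compactSpace.mp ((Subgroup.isClosed_topologicalClosure _).isCompact)

instance {d : ℕ} (G : Subgroup (TreeAut d)) : MeasurableSpace (Ginf G) := borel _

instance {d : ℕ} (G : Subgroup (TreeAut d)) : BorelSpace (Ginf G) := ⟨rfl⟩

/-- `Y_n(g)`: the number of fixed points of `π_n(g)` on the `n`-th level `X^n`. -/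
noncomputable def Ynat {d : ℕ} (G : Subgroup (TreeAut d)) (n : ℕ) (g : Ginf G) : ℕ :=
  Nat.card {v : Level d n // (g : Π m : ℕ, Equiv.Perm (Level d m)) n v = v}

/-- An element `g` of `G∞` fixes the end `w ∈ X^ω` if it fixes every finite initial
segment of `w`. -/
def GinfFixesEnd {d : ℕ} {G : Subgroup (TreeAut d)} (g : Ginf G) (w : ℕ → Fin d) : Prop :=
  ∀ n : ℕ, (g : Π m : ℕ, Equiv.Perm (Level d m)) n ⟨(List.range n).map w, by simp⟩ =
    ⟨(List.range n).map w, by simp⟩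

end Profinite

/-! ### Auxiliary development for the main theorem -/

namespace FPP

open Finset

variable {d : ℕ}

noncomputable instance instFintypeLevel (d n : ℕ) : Fintype (Level d n) := Fintype.ofFinite _
noncomputable instance instFintypePermLevel (d n : ℕ) : Fintype (Equiv.Perm (Level d n)) :=
  Fintype.ofFinite _

instance : Subsingleton (Level d 0) :=
  ⟨fun v w => Subtype.ext (by
    have hv := v.2; have hw := w.2
    rw [List.length_eq_zero_iff] at hv hw
    rw [hv, hw])⟩

/-- The parent of a vertex at level `n+1`. -/
def par {n : ℕ} (w : Level d (n + 1)) : Level d n :=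
  ⟨w.1.take n, by rw [List.length_take, w.2]; omega⟩

/-- The child of a level-`n` vertex indexed by `x`. -/
def snoc {n : ℕ} (v : Level d n) (x : Fin d) : Level d (n + 1) :=
  ⟨v.1 ++ [x], by simp [v.2]⟩

lemma par_snoc {n : ℕ} (v : Level d n) (x : Fin d) : par (snoc v x) = v :=
  Subtype.ext (List.take_left' v.2)

lemma level_ne_nil {n : ℕ} (w : Level d (n + 1)) : w.1 ≠ [] := by
  intro h
  have h2 := w.2
  rw [h] at h2
  simp at h2

/-- The last letter of a vertex at level `n+1`. -/
def lastFin {n : ℕ} (w : Level d (n + 1)) : Fin d := w.1.getLast (level_ne_nil w)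

lemma snoc_par {n : ℕ} (w : Level d (n + 1)) : snoc (par w) (lastFin w) = w := by
  apply Subtype.ext
  show w.1.take n ++ [w.1.getLast _] = w.1
  have h1 : w.1.take n = w.1.dropLast := by
    rw [List.dropLast_eq_take, w.2]
    simp
  rw [h1, List.dropLast_append_getLast]

lemma lastFin_snoc {n : ℕ} (v : Level d n) (x : Fin d) : lastFin (snoc v x) = x := by
  simp only [lastFin, snoc]
  exact List.getLast_append _

/-- Vertices at level `n+1` are pairs (parent, last letter). -/
def levelSuccEquiv (d n : ℕ) : Level d (n + 1) ≃ Level d n × Fin d where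
  toFun w := (par w, lastFin w)
  invFun p := snoc p.1 p.2
  left_inv w := snoc_par w
  right_inv p := by
    refine Prod.ext (par_snoc p.1 p.2) ?_
    exact lastFin_snoc p.1 p.2

lemma par_levelHom {n : ℕ} (b : TreeAut d) (w : Level d (n + 1)) :
    par (levelHom d (n + 1) b w) = levelHom d n b (par w) := by
  apply Subtype.ext
  show ((b : Equiv.Perm (List (Fin d))) w.1).take n =
    (b : Equiv.Perm (List (Fin d))) (w.1.take n)
  have hpre : (b : Equiv.Perm (List (Fin d))) (w.1.take n) <+:
      (b : Equiv.Perm (List (Fin d))) w.1 :=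
    (b.prefix_iff _ _).mp (List.take_prefix n w.1)
  have hlen : ((b : Equiv.Perm (List (Fin d))) (w.1.take n)).length = n := by
    rw [b.length_apply, List.length_take, w.2]; omega
  obtain ⟨t, ht⟩ := hpre
  rw [← ht, List.take_left' hlen]

/-- From a spherically transitive element one obtains, for any two siblings `w`, `u`
at level `n+1`, an element acting trivially on level `n` and sending `w` to `u`. -/
lemma exists_levelTrivial_map {G : Subgroup (TreeAut d)} {a₀ : TreeAut d} (ha₀G : a₀ ∈ G)
    (ha₀ : SphericallyTransitive a₀) {n : ℕ} {v : Level d n} {w u : Level d (n + 1)}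
    (hw : par w = v) (hu : par u = v) :
    ∃ b : TreeAut d, b ∈ G ∧ levelHom d n b = 1 ∧ levelHom d (n + 1) b w = u := by
  obtain ⟨k, hk⟩ := ha₀ (n + 1) (Nat.le_add_left 1 n) w.1 u.1 w.2 u.2
  have hwu : levelHom d (n + 1) (a₀ ^ k) w = u := Subtype.ext hk
  refine ⟨a₀ ^ k, zpow_mem ha₀G k, ?_, hwu⟩
  have hv : levelHom d n (a₀ ^ k) v = v := by
    conv_lhs => rw [← hw]
    rw [← par_levelHom, hwu, hu]
  apply Equiv.ext
  intro v'
  simp only [Equiv.Perm.coe_one, id_eq]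
  rcases Nat.eq_zero_or_pos n with rfl | hn
  · exact Subsingleton.elim _ _
  · obtain ⟨j, hj⟩ := ha₀ n hn v.1 v'.1 v.2 v'.2
    have hj' : levelHom d n (a₀ ^ j) v = v' := Subtype.ext hj
    have comm : a₀ ^ k * a₀ ^ j = a₀ ^ j * a₀ ^ k := by
      rw [← zpow_add, ← zpow_add, add_comm]
    calc (levelHom d n (a₀ ^ k)) v'
        = levelHom d n (a₀ ^ k * a₀ ^ j) v := by
          rw [map_mul, Equiv.Perm.mul_apply, hj']
      _ = levelHom d n (a₀ ^ j * a₀ ^ k) v := by rw [comm]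
      _ = v' := by rw [map_mul, Equiv.Perm.mul_apply, hv, hj']

section GinfSide

variable (G : Subgroup (TreeAut d))

/-- Projection of `G∞` to the permutation group of level `n`. -/
def PP (n : ℕ) (g : Ginf G) : Equiv.Perm (Level d n) :=
  (g : Π m : ℕ, Equiv.Perm (Level d m)) n

lemma PP_mul (n : ℕ) (g h : Ginf G) : PP G n (g * h) = PP G n g * PP G n h := rfl

lemma PP_inv (n : ℕ) (g : Ginf G) : PP G n g⁻¹ = (PP G n g)⁻¹ := rfl

/-- Any element of `G∞` agrees with an element of `G` on two consecutive levels. -/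
lemma exists_realize (n : ℕ) (g : Ginf G) :
    ∃ a : TreeAut d, a ∈ G ∧ levelHom d n a = PP G n g ∧
      levelHom d (n + 1) a = PP G (n + 1) g := by
  have hg : (g : Π m : ℕ, Equiv.Perm (Level d m)) ∈
      _root_.closure ((G.map (prodHom d) : Subgroup (Π m : ℕ, Equiv.Perm (Level d m))) :
        Set (Π m : ℕ, Equiv.Perm (Level d m))) := g.2
  have hsub : ((G.map (prodHom d) : Subgroup (Π m : ℕ, Equiv.Perm (Level d m))) :
      Set (Π m : ℕ, Equiv.Perm (Level d m))) ⊆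
      {p | ∃ a : TreeAut d, a ∈ G ∧ levelHom d n a = p n ∧ levelHom d (n + 1) a = p (n + 1)} := by
    rintro p ⟨a, haG, rfl⟩
    exact ⟨a, haG, rfl, rfl⟩
  have hC : IsClosed {p : Π m : ℕ, Equiv.Perm (Level d m) |
      ∃ a : TreeAut d, a ∈ G ∧ levelHom d n a = p n ∧ levelHom d (n + 1) a = p (n + 1)} := by
    have heq : {p : Π m : ℕ, Equiv.Perm (Level d m) |
        ∃ a : TreeAut d, a ∈ G ∧ levelHom d n a = p n ∧ levelHom d (n + 1) a = p (n + 1)} =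
        (fun p : Π m : ℕ, Equiv.Perm (Level d m) => (p n, p (n + 1))) ⁻¹'
          {q : Equiv.Perm (Level d n) × Equiv.Perm (Level d (n + 1)) |
            ∃ a : TreeAut d, a ∈ G ∧ levelHom d n a = q.1 ∧ levelHom d (n + 1) a = q.2} := rfl
    rw [heq]
    exact (isClosed_discrete _).preimage
      ((continuous_apply n).prodMk (continuous_apply (n + 1)))
  exact closure_minimal hsub hC hg

lemma exists_realize_one (n : ℕ) (g : Ginf G) :
    ∃ a : TreeAut d, a ∈ G ∧ levelHom d n a = PP G n g :=
  (exists_realize G n g).imp fun _ ⟨h1, h2, _⟩ => ⟨h1, h2⟩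

/-- The canonical inclusion of `G` into `G∞`. -/
def toGinf (a : TreeAut d) (ha : a ∈ G) : Ginf G :=
  ⟨prodHom d a, Subgroup.le_topologicalClosure _ (Subgroup.mem_map_of_mem _ ha)⟩

lemma PP_toGinf (n : ℕ) (a : TreeAut d) (ha : a ∈ G) :
    PP G n (toGinf G a ha) = levelHom d n a := rfl

lemma levelHom_succ_inj [NeZero d] {n : ℕ} {b c : TreeAut d}
    (h : levelHom d (n + 1) b = levelHom d (n + 1) c) : levelHom d n b = levelHom d n c := by
  ext v
  have hb := par_levelHom b (snoc v (0 : Fin d))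
  have hc := par_levelHom c (snoc v (0 : Fin d))
  rw [par_snoc] at hb hc
  rw [← hb, ← hc, h]

lemma PP_determines [NeZero d] {n : ℕ} {g h : Ginf G}
    (hgh : PP G (n + 1) g = PP G (n + 1) h) : PP G n g = PP G n h := by
  obtain ⟨a, _, ha1, ha2⟩ := exists_realize G n g
  obtain ⟨b, _, hb1, hb2⟩ := exists_realize G n h
  rw [← ha1, ← hb1]
  exact levelHom_succ_inj (by rw [ha2, hb2, hgh])

lemma PP_par (n : ℕ) (g : Ginf G) (w : Level d (n + 1)) :
    par (PP G (n + 1) g w) = PP G n g (par w) := by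
  obtain ⟨a, _, h1, h2⟩ := exists_realize G n g
  rw [← h1, ← h2, par_levelHom]

end GinfSide

end FPP
namespace FPP

open Finset MeasureTheory

variable {d : ℕ} (G : Subgroup (TreeAut d))

lemma continuous_PP (n : ℕ) : Continuous (PP G n) :=
  (continuous_apply n).comp continuous_subtype_val

lemma measurableSet_PP_preimage (n : ℕ) (S : Set (Equiv.Perm (Level d n))) :
    MeasurableSet (PP G n ⁻¹' S) := by
  rw [← Set.biUnion_preimage_singleton]
  exact MeasurableSet.biUnion (Set.to_countable S) fun σ _ =>
    ((isClosed_discrete {σ}).preimage (continuous_PP G n)).measurableSet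

/-- The σ-algebra generated by the action on level `n`. -/
def filt (n : ℕ) : MeasurableSpace (Ginf G) := MeasurableSpace.comap (PP G n) ⊤

lemma filt_le (n : ℕ) : filt G n ≤ (inferInstance : MeasurableSpace (Ginf G)) := by
  rintro s ⟨S, -, rfl⟩
  exact measurableSet_PP_preimage G n S

lemma filt_mono [NeZero d] : Monotone (filt G) := by
  apply monotone_nat_of_le_succ
  intro n s hs
  obtain ⟨S, -, rfl⟩ := hs
  refine ⟨{τ | ∃ g : Ginf G, PP G (n + 1) g = τ ∧ PP G n g ∈ S}, trivial, ?_⟩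
  ext g
  simp only [Set.mem_preimage, Set.mem_setOf_eq]
  constructor
  · rintro ⟨g', hg'1, hg'2⟩
    have h := PP_determines G hg'1
    rwa [h] at hg'2
  · intro hg
    exact ⟨g, rfl, hg⟩

/-- The filtration by levels on `G∞`. -/
noncomputable def filtration [NeZero d] :
    MeasureTheory.Filtration ℕ (inferInstance : MeasurableSpace (Ginf G)) :=
  ⟨filt G, filt_mono G, filt_le G⟩

/-- The fiber of the level-`n` projection over `σ`. -/
def fiber (n : ℕ) (σ : Equiv.Perm (Level d n)) : Set (Ginf G) := PP G n ⁻¹' {σ}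

lemma measurableSet_fiber (n : ℕ) (σ : Equiv.Perm (Level d n)) :
    MeasurableSet (fiber G n σ) := measurableSet_PP_preimage G n {σ}

lemma measure_fiber (μ : Measure (Ginf G)) [μ.IsMulLeftInvariant] (n : ℕ) (g₀ : Ginf G) :
    μ (fiber G n (PP G n g₀)) = μ (fiber G n 1) := by
  have heq : fiber G n (PP G n g₀) = (fun g => g₀⁻¹ * g) ⁻¹' fiber G n 1 := by
    ext g
    simp only [fiber, Set.mem_preimage, Set.mem_singleton_iff, PP_mul, PP_inv, inv_mul_eq_one]
    exact eq_comm
  rw [heq]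
  exact measure_preimage_mul μ g₀⁻¹ (fiber G n 1)

open scoped Classical in
/-- The set of level-`(n+1)` permutations coming from elements of `G` inducing `σ` on
level `n`. -/
noncomputable def coset (n : ℕ) (σ : Equiv.Perm (Level d n)) :
    Finset (Equiv.Perm (Level d (n + 1))) :=
  Finset.univ.filter fun τ =>
    ∃ b : TreeAut d, b ∈ G ∧ levelHom d (n + 1) b = τ ∧ levelHom d n b = σ

open scoped Classical in
noncomputable def cosetFix (n : ℕ) (σ : Equiv.Perm (Level d n)) (w : Level d (n + 1)) :
    Finset (Equiv.Perm (Level d (n + 1))) :=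
  (coset G n σ).filter fun τ => τ w = w

lemma mem_coset {n : ℕ} {σ : Equiv.Perm (Level d n)} {τ : Equiv.Perm (Level d (n + 1))} :
    τ ∈ coset G n σ ↔
      ∃ b : TreeAut d, b ∈ G ∧ levelHom d (n + 1) b = τ ∧ levelHom d n b = σ := by
  simp [coset]

lemma mem_cosetFix {n : ℕ} {σ : Equiv.Perm (Level d n)} {w : Level d (n + 1)}
    {τ : Equiv.Perm (Level d (n + 1))} :
    τ ∈ cosetFix G n σ w ↔
      (∃ b : TreeAut d, b ∈ G ∧ levelHom d (n + 1) b = τ ∧ levelHom d n b = σ) ∧ τ w = w := by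
  classical
  simp [cosetFix, mem_coset]

lemma fiber_decomp [NeZero d] (n : ℕ) (a : TreeAut d) (haG : a ∈ G)
    (pred : Equiv.Perm (Level d (n + 1)) → Prop) [DecidablePred pred] :
    fiber G n (levelHom d n a) ∩ {g | pred (PP G (n + 1) g)} =
      ⋃ τ ∈ (coset G n (levelHom d n a)).filter pred, fiber G (n + 1) τ := by
  ext g
  simp only [Set.mem_inter_iff, fiber, Set.mem_preimage, Set.mem_singleton_iff,
    Set.mem_setOf_eq, Set.mem_iUnion, Finset.mem_filter, mem_coset, exists_prop]
  constructor
  · rintro ⟨hσ, hpred⟩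
    obtain ⟨a', ha'G, h1, h2⟩ := exists_realize G n g
    exact ⟨PP G (n + 1) g, ⟨⟨a', ha'G, h2, h1.trans hσ⟩, hpred⟩, rfl⟩
  · rintro ⟨τ, ⟨⟨b, hbG, hb1, hb2⟩, hpred⟩, hgτ⟩
    obtain ⟨a', ha'G, h1, h2⟩ := exists_realize G n g
    have hbb : levelHom d (n + 1) a' = levelHom d (n + 1) b := by rw [h2, hgτ, hb1]
    have h3 := levelHom_succ_inj hbb
    constructor
    · rw [← h1, h3, hb2]
    · rw [hgτ]; exact hpred

lemma measure_fiber_inter [NeZero d] (μ : Measure (Ginf G)) [μ.IsMulLeftInvariant]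
    (n : ℕ) {a : TreeAut d} (haG : a ∈ G)
    (pred : Equiv.Perm (Level d (n + 1)) → Prop) [DecidablePred pred] :
    μ (fiber G n (levelHom d n a) ∩ {g | pred (PP G (n + 1) g)}) =
      ((coset G n (levelHom d n a)).filter pred).card * μ (fiber G (n + 1) 1) := by
  rw [fiber_decomp G n a haG pred]
  rw [measure_biUnion_finset ?disj (fun τ _ => measurableSet_fiber G (n + 1) τ)]
  case disj =>
    intro τ₁ _ τ₂ _ hne
    simp only [Function.onFun]
    rw [Set.disjoint_left]
    intro g hg1 hg2
    exact hne ((Set.mem_singleton_iff.mp hg1).symm.trans (Set.mem_singleton_iff.mp hg2))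
  rw [Finset.sum_congr rfl fun τ hτ => ?_, Finset.sum_const, nsmul_eq_mul]
  obtain ⟨b, hbG, hb1, -⟩ := (mem_coset G).mp (Finset.mem_filter.mp hτ).1
  rw [← hb1, ← PP_toGinf G (n + 1) b hbG, measure_fiber]

lemma card_coset_eq [NeZero d] (n : ℕ) {a : TreeAut d} (haG : a ∈ G) :
    (coset G n (levelHom d n a)).card = (coset G n 1).card := by
  classical
  apply Finset.card_bij' (fun τ _ => (levelHom d (n + 1) a)⁻¹ * τ)
    (fun h _ => levelHom d (n + 1) a * h)
  · intro τ hτ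
    obtain ⟨b, hbG, hb1, hb2⟩ := (mem_coset G).mp hτ
    refine (mem_coset G).mpr ⟨a⁻¹ * b, mul_mem (inv_mem haG) hbG, ?_, ?_⟩
    · rw [map_mul, map_inv, hb1]
    · rw [map_mul, map_inv, hb2, inv_mul_cancel]
  · intro h hh
    obtain ⟨b, hbG, hb1, hb2⟩ := (mem_coset G).mp hh
    refine (mem_coset G).mpr ⟨a * b, mul_mem haG hbG, ?_, ?_⟩
    · rw [map_mul, hb1]
    · rw [map_mul, hb2, mul_one]
  · intro τ _; group
  · intro τ _; group

end FPP
namespace FPP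

open Finset

variable {d : ℕ}

lemma card_transfer [NeZero d] {G : Subgroup (TreeAut d)} {a₀ : TreeAut d} (ha₀G : a₀ ∈ G)
    (ha₀ : SphericallyTransitive a₀) {n : ℕ} {v : Level d n} {w u w' u' : Level d (n + 1)}
    (hw : par w = v) (hu : par u = v) (hw' : par w' = v) (hu' : par u' = v) :
    ((coset G n 1).filter fun h => h w = u).card =
      ((coset G n 1).filter fun h => h w' = u').card := by
  classical
  obtain ⟨b₁, hb₁G, hb₁triv, hb₁⟩ := exists_levelTrivial_map ha₀G ha₀ hw' hw
  obtain ⟨b₂, hb₂G, hb₂triv, hb₂⟩ := exists_levelTrivial_map ha₀G ha₀ hu hu'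
  set β₁ := levelHom d (n + 1) b₁ with hβ₁
  set β₂ := levelHom d (n + 1) b₂ with hβ₂
  apply Finset.card_bij' (fun τ _ => β₂ * τ * β₁) (fun τ _ => β₂⁻¹ * τ * β₁⁻¹)
  · intro τ hτ
    obtain ⟨hτc, hτw⟩ := Finset.mem_filter.mp hτ
    obtain ⟨b, hbG, hb1, hbtriv⟩ := (mem_coset G).mp hτc
    refine Finset.mem_filter.mpr ⟨(mem_coset G).mpr
      ⟨b₂ * b * b₁, mul_mem (mul_mem hb₂G hbG) hb₁G, ?_, ?_⟩, ?_⟩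
    · rw [map_mul, map_mul, hb1]
    · rw [map_mul, map_mul, hbtriv, hb₂triv, hb₁triv, one_mul, one_mul]
    · simp only [Equiv.Perm.mul_apply]
      rw [hb₁, hτw, hb₂]
  · intro τ hτ
    obtain ⟨hτc, hτw⟩ := Finset.mem_filter.mp hτ
    obtain ⟨b, hbG, hb1, hbtriv⟩ := (mem_coset G).mp hτc
    refine Finset.mem_filter.mpr ⟨(mem_coset G).mpr
      ⟨b₂⁻¹ * b * b₁⁻¹, mul_mem (mul_mem (inv_mem hb₂G) hbG) (inv_mem hb₁G), ?_, ?_⟩, ?_⟩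
    · rw [map_mul, map_mul, map_inv, map_inv, hb1]
    · rw [map_mul, map_mul, map_inv, map_inv, hbtriv, hb₂triv, hb₁triv]; group
    · simp only [Equiv.Perm.mul_apply]
      have h1 : β₁⁻¹ w = w' := by rw [← hb₁]; exact Equiv.symm_apply_apply β₁ w'
      rw [h1, hτw, ← hb₂]
      exact Equiv.symm_apply_apply β₂ u
  · intro τ _; group
  · intro τ _; group

lemma sum_cosetFix_card [NeZero d] {G : Subgroup (TreeAut d)} {a₀ : TreeAut d} (ha₀G : a₀ ∈ G)
    (ha₀ : SphericallyTransitive a₀) {n : ℕ} {a : TreeAut d} (haG : a ∈ G)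
    {v : Level d n} (hv : levelHom d n a v = v) :
    ∑ x : Fin d, (cosetFix G n (levelHom d n a) (snoc v x)).card = (coset G n 1).card := by
  classical
  set σ := levelHom d n a with hσdef
  set τ₀ := levelHom d (n + 1) a with hτ₀def
  have step1 : ∀ x : Fin d, (cosetFix G n σ (snoc v x)).card =
      ((coset G n 1).filter fun h => h (snoc v x) = τ₀⁻¹ (snoc v x)).card := by
    intro x
    apply Finset.card_bij' (fun τ _ => τ₀⁻¹ * τ) (fun h _ => τ₀ * h)
    · intro τ hτ
      obtain ⟨⟨b, hbG, hb1, hb2⟩, hfix⟩ := (mem_cosetFix G).mp hτ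
      refine Finset.mem_filter.mpr ⟨(mem_coset G).mpr
        ⟨a⁻¹ * b, mul_mem (inv_mem haG) hbG, ?_, ?_⟩, ?_⟩
      · rw [map_mul, map_inv, hb1]
      · rw [map_mul, map_inv, hb2, hσdef, inv_mul_cancel]
      · simp only [Equiv.Perm.mul_apply]
        rw [hfix]
    · intro h hh
      obtain ⟨hhc, hhfix⟩ := Finset.mem_filter.mp hh
      obtain ⟨b, hbG, hb1, hb2⟩ := (mem_coset G).mp hhc
      refine (mem_cosetFix G).mpr ⟨⟨a * b, mul_mem haG hbG, ?_, ?_⟩, ?_⟩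
      · rw [map_mul, hb1]
      · rw [map_mul, hb2, mul_one]
      · simp only [Equiv.Perm.mul_apply]
        rw [hhfix]
        exact Equiv.apply_symm_apply τ₀ (snoc v x)
    · intro τ _; group
    · intro τ _; group
  have hpar_inv : ∀ x : Fin d, par (τ₀⁻¹ (snoc v x)) = v := by
    intro x
    have hmi : τ₀⁻¹ = levelHom d (n + 1) a⁻¹ := (map_inv _ _).symm
    rw [hmi, par_levelHom, par_snoc, map_inv]
    conv_lhs => rw [← hv]
    exact Equiv.symm_apply_apply σ v
  have step3 : ∀ x : Fin d,
      ((coset G n 1).filter fun h => h (snoc v x) = τ₀⁻¹ (snoc v x)).card =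
      ((coset G n 1).filter fun h => h (snoc v (0 : Fin d)) = snoc v x).card := by
    intro x
    exact card_transfer ha₀G ha₀ (par_snoc v x) (hpar_inv x) (par_snoc v 0) (par_snoc v x)
  have step4 : ∑ x : Fin d,
      ((coset G n 1).filter fun h => h (snoc v (0 : Fin d)) = snoc v x).card
      = (coset G n 1).card := by
    rw [eq_comm]
    rw [Finset.card_eq_sum_card_fiberwise
      (f := fun h : Equiv.Perm (Level d (n + 1)) => lastFin (h (snoc v 0)))
      (t := Finset.univ) (fun h _ => Finset.mem_univ _)]
    apply Finset.sum_congr rfl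
    intro x _
    congr 1
    apply Finset.filter_congr
    intro h hh
    obtain ⟨b, hbG, hb1, hbtriv⟩ := (mem_coset G).mp hh
    have hparh : par (h (snoc v 0)) = v := by
      rw [← hb1, par_levelHom, par_snoc, hbtriv]
      rfl
    constructor
    · intro hx
      conv_lhs => rw [← snoc_par (h (snoc v 0))]
      rw [hparh, hx]
    · intro hx
      rw [hx]
      exact lastFin_snoc v x
  rw [Finset.sum_congr rfl fun x _ => (step1 x).trans (step3 x), step4]

open scoped Classical in
/-- The number of fixed points of a permutation. -/
noncomputable def fixCount {α : Type*} [Fintype α] (σ : Equiv.Perm α) : ℕ :=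
  Nat.card {x : α // σ x = x}

lemma fixCount_eq_filter {α : Type*} [Fintype α] [DecidableEq α] (σ : Equiv.Perm α) :
    fixCount σ = (Finset.univ.filter fun x => σ x = x).card := by
  classical
  rw [fixCount, Nat.card_eq_fintype_card, Fintype.card_subtype]

lemma key_count [NeZero d] {G : Subgroup (TreeAut d)} {a₀ : TreeAut d} (ha₀G : a₀ ∈ G)
    (ha₀ : SphericallyTransitive a₀) {n : ℕ} {a : TreeAut d} (haG : a ∈ G) :
    ∑ w : Level d (n + 1), (cosetFix G n (levelHom d n a) w).card =
      fixCount (levelHom d n a) * (coset G n 1).card := by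
  classical
  have hreindex : ∑ w : Level d (n + 1), (cosetFix G n (levelHom d n a) w).card =
      ∑ p : Level d n × Fin d, (cosetFix G n (levelHom d n a) (snoc p.1 p.2)).card := by
    rw [← Equiv.sum_comp (levelSuccEquiv d n).symm
      fun w => (cosetFix G n (levelHom d n a) w).card]
    rfl
  rw [hreindex, Fintype.sum_prod_type]
  have hsplit : ∀ v : Level d n,
      (∑ x : Fin d, (cosetFix G n (levelHom d n a) (snoc v x)).card)
      = if levelHom d n a v = v then (coset G n 1).card else 0 := by
    intro v
    by_cases hv : levelHom d n a v = v
    · rw [if_pos hv]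
      exact sum_cosetFix_card ha₀G ha₀ haG hv
    · rw [if_neg hv]
      apply Finset.sum_eq_zero
      intro x _
      rw [Finset.card_eq_zero, Finset.eq_empty_iff_forall_notMem]
      intro τ hτ
      obtain ⟨⟨b, hbG, hb1, hb2⟩, hfix⟩ := (mem_cosetFix G).mp hτ
      apply hv
      have hkey : par (τ (snoc v x)) = levelHom d n a (par (snoc v x)) := by
        rw [← hb1, par_levelHom, hb2]
      rw [hfix, par_snoc] at hkey
      exact hkey.symm
  rw [Finset.sum_congr rfl fun v _ => hsplit v]
  rw [Finset.sum_ite, Finset.sum_const_zero, add_zero, Finset.sum_const, smul_eq_mul,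
    fixCount_eq_filter]

end FPP
namespace FPP

open Finset MeasureTheory

variable {d : ℕ} (G : Subgroup (TreeAut d))

/-- The real-valued fixed point count at level `m`. -/
noncomputable def Yr (m : ℕ) (g : Ginf G) : ℝ := (Ynat G m g : ℝ)

lemma Ynat_eq_fixCount (m : ℕ) (g : Ginf G) : Ynat G m g = fixCount (PP G m g) := rfl

lemma Yr_eq_sum (m : ℕ) (g : Ginf G) :
    Yr G m g = ∑ w : Level d m,
      Set.indicator {g' : Ginf G | PP G m g' w = w} (fun _ => (1 : ℝ)) g := by
  classical
  simp only [Yr, Ynat_eq_fixCount]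
  rw [fixCount_eq_filter, Finset.card_filter]
  push_cast
  apply Finset.sum_congr rfl
  intro w _
  rw [Set.indicator_apply]
  by_cases h : PP G m g w = w <;> simp [h]

lemma measurableSet_B (m : ℕ) (w : Level d m) :
    MeasurableSet {g : Ginf G | PP G m g w = w} :=
  measurableSet_PP_preimage G m {τ | τ w = w}

lemma integrable_Yr (μ : Measure (Ginf G)) [IsFiniteMeasure μ] (m : ℕ) :
    Integrable (Yr G m) μ := by
  have h : Yr G m = fun g => ∑ w : Level d m,
      Set.indicator {g' : Ginf G | PP G m g' w = w} (fun _ => (1 : ℝ)) g :=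
    funext (Yr_eq_sum G m)
  rw [h]
  apply integrable_finset_sum
  intro w _
  exact (integrable_const (1 : ℝ)).indicator (measurableSet_B G m w)

lemma stronglyMeasurable_Yr (m : ℕ) : StronglyMeasurable[filt G m] (Yr G m) := by
  classical
  have h : Yr G m = (fun τ : Equiv.Perm (Level d m) => (fixCount τ : ℝ)) ∘ PP G m := by
    funext g
    simp only [Function.comp_apply, Yr, Ynat_eq_fixCount]
  rw [h]
  exact (measurable_from_top.comp (measurable_iff_comap_le.mpr le_rfl)).stronglyMeasurable

lemma fiber_integral_eq [NeZero d] {G : Subgroup (TreeAut d)} {a₀ : TreeAut d} (ha₀G : a₀ ∈ G)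
    (ha₀ : SphericallyTransitive a₀) (μ : Measure (Ginf G)) [μ.IsHaarMeasure]
    [IsProbabilityMeasure μ] (n : ℕ) (σ : Equiv.Perm (Level d n)) :
    ∫ g in fiber G n σ, Yr G n g ∂μ = ∫ g in fiber G n σ, Yr G (n + 1) g ∂μ := by
  classical
  rcases Set.eq_empty_or_nonempty (fiber G n σ) with hemp | ⟨g₀, hg₀⟩
  · rw [hemp]; simp
  obtain ⟨a, haG, ha⟩ := exists_realize_one G n g₀
  have hσa : levelHom d n a = σ := ha.trans hg₀
  subst hσa
  set c := μ (fiber G (n + 1) 1) with hc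
  have hconst : Set.EqOn (Yr G n)
      (fun _ => (fixCount (levelHom d n a) : ℝ)) (fiber G n (levelHom d n a)) := by
    intro g hg
    have hPg : PP G n g = levelHom d n a := hg
    simp only [Yr, Ynat_eq_fixCount, hPg]
  have hμfib : μ (fiber G n (levelHom d n a)) = (coset G n (levelHom d n a)).card * c := by
    have h := measure_fiber_inter G μ n haG (fun _ => True)
    simpa using h
  have hLHS : ∫ g in fiber G n (levelHom d n a), Yr G n g ∂μ =
      (fixCount (levelHom d n a) : ℝ) * (((coset G n (levelHom d n a)).card : ℝ) * c.toReal) := by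
    rw [setIntegral_congr_fun (measurableSet_fiber G n _) hconst, setIntegral_const, measureReal_def, hμfib,
      smul_eq_mul, ENNReal.toReal_mul, ENNReal.toReal_natCast]
    ring
  have hRHS : ∫ g in fiber G n (levelHom d n a), Yr G (n + 1) g ∂μ =
      ∑ w : Level d (n + 1), ((cosetFix G n (levelHom d n a) w).card : ℝ) * c.toReal := by
    simp only [Yr_eq_sum G (n + 1)]
    rw [integral_finset_sum]
    · apply Finset.sum_congr rfl
      intro w _
      rw [setIntegral_indicator (measurableSet_B G (n + 1) w), setIntegral_const,
        smul_eq_mul, mul_one]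
      have h := measure_fiber_inter G μ n haG (fun τ => τ w = w)
      rw [show {g : Ginf G | PP G (n + 1) g w = w} =
          {g : Ginf G | (fun τ : Equiv.Perm (Level d (n + 1)) => τ w = w) (PP G (n + 1) g)}
          from rfl, measureReal_def, h, ENNReal.toReal_mul, ENNReal.toReal_natCast]
      congr 2
    · intro w _
      exact ((integrable_const (1 : ℝ)).indicator (measurableSet_B G (n + 1) w)).integrableOn
  rw [hLHS, hRHS, ← Finset.sum_mul, card_coset_eq G n haG]
  have hsum : (∑ w : Level d (n + 1), ((cosetFix G n (levelHom d n a) w).card : ℝ))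
      = ((fixCount (levelHom d n a) * (coset G n 1).card : ℕ) : ℝ) := by
    rw [← key_count ha₀G ha₀ haG]
    push_cast
    rfl
  rw [hsum]
  push_cast
  ring

lemma condexp_step [NeZero d] {G : Subgroup (TreeAut d)} {a₀ : TreeAut d} (ha₀G : a₀ ∈ G)
    (ha₀ : SphericallyTransitive a₀) (μ : Measure (Ginf G)) [μ.IsHaarMeasure]
    [IsProbabilityMeasure μ] (n : ℕ) :
    Yr G n =ᵐ[μ] μ[Yr G (n + 1) | filt G n] := by
  classical
  refine ae_eq_condExp_of_forall_setIntegral_eq (filt_le G n)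
    (integrable_Yr G μ (n + 1))
    (fun s _ _ => (integrable_Yr G μ n).integrableOn)
    (fun s hs _ => ?_)
    (StronglyMeasurable.aestronglyMeasurable (stronglyMeasurable_Yr G n))
  obtain ⟨S, -, rfl⟩ := hs
  have hdecomp : PP G n ⁻¹' S = ⋃ σ ∈ Finset.univ.filter (· ∈ S), fiber G n σ := by
    ext g
    simp only [Set.mem_preimage, Set.mem_iUnion, Finset.mem_filter, Finset.mem_univ, true_and,
      fiber, Set.mem_singleton_iff, exists_prop]
    constructor
    · intro h
      exact ⟨PP G n g, h, rfl⟩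
    · rintro ⟨σ, hσ, hgσ⟩
      rwa [hgσ]
  have hdisj : Set.Pairwise ↑(Finset.univ.filter (· ∈ S)) (Function.onFun Disjoint (fiber G n)) := by
    intro σ₁ _ σ₂ _ hne
    simp only [Function.onFun]
    rw [Set.disjoint_left]
    intro g hg1 hg2
    exact hne ((Set.mem_singleton_iff.mp hg1).symm.trans (Set.mem_singleton_iff.mp hg2))
  rw [hdecomp,
    integral_biUnion_finset _ (fun σ _ => measurableSet_fiber G n σ) hdisj
      (fun σ _ => (integrable_Yr G μ n).integrableOn),
    integral_biUnion_finset _ (fun σ _ => measurableSet_fiber G n σ) hdisj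
      (fun σ _ => (integrable_Yr G μ (n + 1)).integrableOn)]
  exact Finset.sum_congr rfl fun σ _ => fiber_integral_eq ha₀G ha₀ μ n σ

end FPP

open MeasureTheory in
/-- If `G ≤ Aut(X*)` has a spherically transitive element, then for almost every
`g ∈ G∞` (w.r.t. the normalized Haar measure) the sequence `Y_1(g), Y_2(g), …` of
fixed-point counts is eventually constant. -/
theorem fixedPointProcess_eventually_constant {d : ℕ} (hd : 2 ≤ d)
    (G : Subgroup (TreeAut d))
    (hst : ∃ g ∈ G, SphericallyTransitive g)
    (μ : Measure (Ginf G)) [μ.IsHaarMeasure] [IsProbabilityMeasure μ] :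
    μ {g : Ginf G | ∃ N : ℕ, ∀ m : ℕ, N ≤ m → Ynat G m g = Ynat G N g} = 1 := by
  classical
  haveI : NeZero d := ⟨by omega⟩
  obtain ⟨a₀, ha₀G, ha₀⟩ := hst
  set f : ℕ → Ginf G → ℝ := FPP.Yr G with hf
  have hadp : StronglyAdapted (FPP.filtration G) f := fun n => FPP.stronglyMeasurable_Yr G n
  have hint : ∀ n, Integrable (f n) μ := fun n => FPP.integrable_Yr G μ n
  have hmg : Martingale f (FPP.filtration G) μ :=
    martingale_nat hadp hint fun n => FPP.condexp_step ha₀G ha₀ μ n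
  -- the mean of `f n` is constant, equal to `1`
  have hY0 : ∀ g : Ginf G, f 0 g = 1 := by
    intro g
    have h1 : Ynat G 0 g = 1 := by
      haveI : Unique {v : Level d 0 // (g : Π m : ℕ, Equiv.Perm (Level d m)) 0 v = v} :=
        { default := ⟨⟨[], rfl⟩, Subsingleton.elim _ _⟩
          uniq := fun v => Subtype.ext (Subsingleton.elim _ _) }
      exact Nat.card_unique
    show (Ynat G 0 g : ℝ) = 1
    rw [h1]
    norm_num
  have hmean : ∀ n, ∫ g, f n g ∂μ = 1 := by
    intro n
    have h := hmg.setIntegral_eq (Nat.zero_le n)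
      (@MeasurableSet.univ _ ((FPP.filtration G) 0))
    rw [setIntegral_univ, setIntegral_univ] at h
    rw [← h, show f 0 = fun _ => (1 : ℝ) from funext hY0]
    simp
  have hbdd : ∀ n, eLpNorm (f n) 1 μ ≤ ((1 : NNReal) : ENNReal) := by
    intro n
    rw [eLpNorm_one_eq_lintegral_enorm]
    have hnn : 0 ≤ᵐ[μ] f n := Filter.Eventually.of_forall fun g => by
      show (0 : ℝ) ≤ (Ynat G n g : ℝ)
      positivity
    have h1 : ∫⁻ g, ‖f n g‖ₑ ∂μ = ∫⁻ g, ENNReal.ofReal (f n g) ∂μ :=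
      lintegral_congr fun g => Real.enorm_eq_ofReal (by
        show (0 : ℝ) ≤ (Ynat G n g : ℝ); positivity)
    rw [h1, ← ofReal_integral_eq_lintegral_ofReal (hint n) hnn, hmean n]
    simp
  have hconv := hmg.submartingale.ae_tendsto_limitProcess hbdd
  have hae : ∀ᵐ g ∂μ,
      g ∈ {g : Ginf G | ∃ N : ℕ, ∀ m : ℕ, N ≤ m → Ynat G m g = Ynat G N g} := by
    filter_upwards [hconv] with g hg
    obtain ⟨N, hN⟩ := Metric.cauchySeq_iff'.mp hg.cauchySeq (1 / 2) (by norm_num)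
    refine ⟨N, fun m hm => ?_⟩
    have hd2 := hN m hm
    rw [Real.dist_eq] at hd2
    by_contra hne
    have hge : (1 : ℝ) ≤ |f m g - f N g| := by
      have hcast : f m g - f N g = (((Ynat G m g : ℤ) - (Ynat G N g : ℤ) : ℤ) : ℝ) := by
        show (Ynat G m g : ℝ) - (Ynat G N g : ℝ) = _
        push_cast
        ring
      rw [hcast, ← Int.cast_abs]
      have hne' : (Ynat G m g : ℤ) - (Ynat G N g : ℤ) ≠ 0 := by
        intro h0
        exact hne (by exact_mod_cast sub_eq_zero.mp h0)
      exact_mod_cast Int.one_le_abs hne'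
    linarith
  have hcompl : μ {g : Ginf G | ∃ N : ℕ, ∀ m : ℕ, N ≤ m → Ynat G m g = Ynat G N g}ᶜ = 0 :=
    ae_iff.mp hae
  have hμs : 1 ≤ μ {g : Ginf G | ∃ N : ℕ, ∀ m : ℕ, N ≤ m → Ynat G m g = Ynat G N g} := by
    have hu : (1 : ENNReal) = μ Set.univ := measure_univ.symm
    rw [hu, ← Set.union_compl_self
      {g : Ginf G | ∃ N : ℕ, ∀ m : ℕ, N ≤ m → Ynat G m g = Ynat G N g}]
    refine le_trans (measure_union_le _ _) ?_
    rw [hcompl, add_zero]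
  exact le_antisymm prob_le_one hμs
end

section
/- Let T = (π_1, …, π_n) be a tree-like multi-set of permutations of a finite set X. If #Fix(π_i) + #Fix(π_j) ≤ 3 for some pair of indices i ≠ j, then π_k is the identity permutation for every index k ∉ {i, j}. -/
/-- The cycle graph of a multi-set (indexed family) of permutations of `X`: a bipartite
graph whose white vertices are the points of `X` and whose black vertices are the cycles
of length at least 2 of the permutations (counted with multiplicity over the index set),
a white vertex being joined to a cycle exactly when the cycle moves it. -/
def cycleGraph {I X : Type*} [Fintype X] [DecidableEq X] (π : I → Equiv.Perm X) :
    SimpleGraph (X ⊕ {p : I × Equiv.Perm X // p.2 ∈ (π p.1).cycleFactorsFinset}) where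
  Adj a b := ∃ (x : X) (c : {p : I × Equiv.Perm X // p.2 ∈ (π p.1).cycleFactorsFinset}),
    c.1.2 x ≠ x ∧ ((a = Sum.inl x ∧ b = Sum.inr c) ∨ (a = Sum.inr c ∧ b = Sum.inl x))
  symm := by
    refine ⟨?_⟩
    rintro a b ⟨x, c, hc, (⟨rfl, rfl⟩ | ⟨rfl, rfl⟩)⟩
    · exact ⟨x, c, hc, Or.inr ⟨rfl, rfl⟩⟩
    · exact ⟨x, c, hc, Or.inl ⟨rfl, rfl⟩⟩
  loopless := by
    refine ⟨?_⟩
    rintro a ⟨x, c, hc, (⟨rfl, h⟩ | ⟨rfl, h⟩)⟩ <;> simp at h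

/-- A multi-set (indexed family) of permutations of `X` is tree-like if its cycle graph
is a tree. -/
def TreeLikeFamily {I X : Type*} [Fintype X] [DecidableEq X] (π : I → Equiv.Perm X) :
    Prop :=
  (cycleGraph π).IsTree

/-- The number of fixed points of a permutation of a finite set. -/
def fixCard {X : Type*} [Fintype X] [DecidableEq X] (σ : Equiv.Perm X) : ℕ :=
  (Finset.univ.filter fun x => σ x = x).card

private lemma sum_support_cycleFactors {X : Type*} [Fintype X] [DecidableEq X]
    (σ : Equiv.Perm X) :
    ∑ c ∈ σ.cycleFactorsFinset, c.support.card = σ.support.card := by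
  rw [← Equiv.Perm.sum_cycleType, Equiv.Perm.cycleType_def, Finset.sum]
  rfl

private lemma sum_over_cycles {n : ℕ} {X : Type*} [Fintype X] [DecidableEq X]
    (π : Fin n → Equiv.Perm X) (f : Equiv.Perm X → ℕ) :
    ∑ c : {p : Fin n × Equiv.Perm X // p.2 ∈ (π p.1).cycleFactorsFinset}, f c.1.2
      = ∑ k, ∑ σ ∈ (π k).cycleFactorsFinset, f σ := by
  classical
  rw [← Finset.sum_subtype (Finset.univ.filter
      (fun p : Fin n × Equiv.Perm X => p.2 ∈ (π p.1).cycleFactorsFinset))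
      (by simp) (fun p => f p.2)]
  rw [Finset.sum_filter, Fintype.sum_prod_type]
  refine Finset.sum_congr rfl fun k _ => ?_
  rw [← Finset.sum_filter]
  exact Finset.sum_congr (by ext a; simp) (fun _ _ => rfl)

/-- For a tree-like multi-set `(π_1, …, π_n)` of permutations of a finite set `X`: if
`#Fix(π_i) + #Fix(π_j) ≤ 3` for some pair of distinct indices `i ≠ j`, then `π_k` is the
identity for every index `k ∉ {i, j}`. -/
theorem treeLike_three_fixed_points {n : ℕ} {X : Type*} [Fintype X] [DecidableEq X]
    (π : Fin n → Equiv.Perm X) (hT : TreeLikeFamily π)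
    {i j : Fin n} (hij : i ≠ j)
    (hfix : fixCard (π i) + fixCard (π j) ≤ 3) :
    ∀ k : Fin n, k ≠ i → k ≠ j → π k = 1 := by
  classical
  intro k hki hkj
  by_contra hk
  haveI : Fintype (cycleGraph π).edgeSet := Fintype.ofFinite _
  -- fixCard + support card = card X
  have hfs : ∀ l : Fin n, fixCard (π l) + (π l).support.card = Fintype.card X := by
    intro l
    have h1 : (π l).support = Finset.univ.filter (fun x => ¬ π l x = x) := by
      ext x; simp [Equiv.Perm.mem_support]
    rw [h1]
    unfold fixCard
    rw [Finset.card_filter_add_card_filter_not, Finset.card_univ]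
  -- each permutation: 2 * (number of cycles) ≤ support card
  have hms : ∀ l : Fin n, 2 * (π l).cycleFactorsFinset.card ≤ (π l).support.card := by
    intro l
    have h1 := Finset.card_nsmul_le_sum (π l).cycleFactorsFinset
      (fun c => c.support.card) 2
      (fun c hc => (Equiv.Perm.mem_cycleFactorsFinset_iff.mp hc).1.two_le_card_support)
    rw [smul_eq_mul] at h1
    have h2 := sum_support_cycleFactors (π l)
    omega
  -- edge count of the cycle graph
  have hE : (cycleGraph π).edgeFinset.card
      = ∑ c : {p : Fin n × Equiv.Perm X // p.2 ∈ (π p.1).cycleFactorsFinset},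
          c.1.2.support.card := by
    rw [← Finset.card_sigma]
    refine (Finset.card_bij (fun p _ => s(Sum.inl p.2, Sum.inr p.1)) ?_ ?_ ?_).symm
    · rintro ⟨c, x⟩ hp
      rw [Finset.mem_sigma] at hp
      rw [SimpleGraph.mem_edgeFinset, SimpleGraph.mem_edgeSet]
      exact ⟨x, c, Equiv.Perm.mem_support.mp hp.2, Or.inl ⟨rfl, rfl⟩⟩
    · rintro ⟨c, x⟩ _ ⟨c', x'⟩ _ h
      rw [Sym2.eq_iff] at h
      rcases h with ⟨h1, h2⟩ | ⟨h1, _⟩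
      · obtain rfl := Sum.inl.inj h1
        obtain rfl := Sum.inr.inj h2
        rfl
      · exact absurd h1 (by simp)
    · intro e he
      induction e using Sym2.ind with
      | _ a b =>
        rw [SimpleGraph.mem_edgeFinset, SimpleGraph.mem_edgeSet] at he
        obtain ⟨x, c, hx, ⟨rfl, rfl⟩ | ⟨rfl, rfl⟩⟩ := he
        · exact ⟨⟨c, x⟩, Finset.mem_sigma.mpr ⟨Finset.mem_univ _,
            Equiv.Perm.mem_support.mpr hx⟩, rfl⟩
        · exact ⟨⟨c, x⟩, Finset.mem_sigma.mpr ⟨Finset.mem_univ _,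
            Equiv.Perm.mem_support.mpr hx⟩, Sym2.eq_swap⟩
  -- the tree identity
  have htree := hT.card_edgeFinset
  rw [hE, Fintype.card_sum] at htree
  have hEsum : ∑ c : {p : Fin n × Equiv.Perm X // p.2 ∈ (π p.1).cycleFactorsFinset},
      c.1.2.support.card = ∑ l, (π l).support.card := by
    exact (sum_over_cycles π (fun σ => σ.support.card)).trans
      (Finset.sum_congr rfl fun l _ => sum_support_cycleFactors (π l))
  have hBcard : Fintype.card {p : Fin n × Equiv.Perm X // p.2 ∈ (π p.1).cycleFactorsFinset}
      = ∑ l, (π l).cycleFactorsFinset.card := by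
    have h := sum_over_cycles π (fun _ => 1)
    simp only [Finset.sum_const, smul_eq_mul, mul_one, Finset.card_univ] at h
    exact h
  rw [hEsum, hBcard] at htree
  -- split the sums over {i, j} and the rest
  have hsplit : ∀ g : Fin n → ℕ,
      ∑ l, g l = g i + g j + ∑ l ∈ (Finset.univ \ {i, j}), g l := by
    intro g
    rw [← Finset.sum_sdiff (Finset.subset_univ ({i, j} : Finset (Fin n))),
      Finset.sum_pair hij]
    omega
  have hks : k ∈ Finset.univ \ ({i, j} : Finset (Fin n)) := by
    simp [hki, hkj]
  have hmk : 1 ≤ (π k).cycleFactorsFinset.card := by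
    rcases Finset.eq_empty_or_nonempty (π k).cycleFactorsFinset with h | h
    · exact absurd (Equiv.Perm.cycleFactorsFinset_eq_empty_iff.mp h) hk
    · exact Finset.card_pos.mpr h
  have hMrest : 1 ≤ ∑ l ∈ (Finset.univ \ {i, j}), (π l).cycleFactorsFinset.card :=
    le_trans hmk (Finset.single_le_sum (f := fun l => (π l).cycleFactorsFinset.card)
      (fun _ _ => Nat.zero_le _) hks)
  have hSrest : 2 * ∑ l ∈ (Finset.univ \ {i, j}), (π l).cycleFactorsFinset.card
      ≤ ∑ l ∈ (Finset.univ \ {i, j}), (π l).support.card := by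
    rw [Finset.mul_sum]
    exact Finset.sum_le_sum fun l _ => hms l
  rw [hsplit (fun l => (π l).support.card),
    hsplit (fun l => (π l).cycleFactorsFinset.card)] at htree
  have h1 := hfs i
  have h2 := hfs j
  have h3 := hms i
  have h4 := hms j
  omega
end
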